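/- Let q > 0. The union of finitely many q-isolated cores of G is again a q-isolated core of G. -/

import Mathlib

open SimpleGraph

variable {V : Type*}

/-- The edge boundary `∂S` of a vertex set `S`: the set of edges of `G` with one endpoint
in `S` and the other endpoint outside `S`. -/
def edgeBdry (G : SimpleGraph V) (S : Set V) : Set (Sym2 V) :=
  {e | e ∈ G.edgeSet ∧ ∃ x ∈ S, ∃ y ∉ S, e = s(x, y)}

/-- The `q`-isolation `Δ_q S := q·|S| − |∂S|` of a vertex set `S`. -/
noncomputable def isolation (G : SimpleGraph V) (q : ℝ) (S : Set V) : ℝ :=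
  q * (S.ncard : ℝ) - ((edgeBdry G S).ncard : ℝ)

/-- A finite vertex set `S` is a `q`-isolated core if `Δ_q S > Δ_q A` for every
proper subset `A ⊊ S`. -/
def IsIsolatedCore (G : SimpleGraph V) (q : ℝ) (S : Set V) : Prop :=
  S.Finite ∧ ∀ A : Set V, A ⊂ S → isolation G q A < isolation G q S

/-- `A_q`: the union of all `q`-isolated cores of `G`. -/
def coreUnion (G : SimpleGraph V) (q : ℝ) : Set V :=
  ⋃₀ {S : Set V | IsIsolatedCore G q S}

/-- A `q`-island: a connected component of (the subgraph of `G` induced by) `A_q`,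
characterised as a nonempty connected subset of `A_q` which is closed under
adjacency within `A_q`. -/
def IsIsland (G : SimpleGraph V) (q : ℝ) (C : Set V) : Prop :=
  C ⊆ coreUnion G q ∧ (G.induce C).Connected ∧
    ∀ x ∈ C, ∀ y ∈ coreUnion G q, G.Adj x y → y ∈ C

/-- The anchored expansion constant
`i(G) = lim_{n→∞} inf { |∂K|/|K| : o ∈ K ⊆ G connected, n ≤ |K| < ∞ }`;
since the infima are nondecreasing in `n`, the limit equals the supremum over `n`. -/
noncomputable def anchoredExpansion (G : SimpleGraph V) (o : V) : ℝ :=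
  ⨆ n : ℕ, sInf {r : ℝ | ∃ K : Set V, o ∈ K ∧ K.Finite ∧ (G.induce K).Connected ∧
    n ≤ K.ncard ∧ r = ((edgeBdry G K).ncard : ℝ) / (K.ncard : ℝ)}

/-- The set of children of a vertex `x` in the tree rooted at `o`: the neighbours of `x`
at larger graph distance from the root. -/
def children (G : SimpleGraph V) (o x : V) : Set V :=
  {y | G.Adj x y ∧ G.dist o y = G.dist o x + 1}


lemma edgeBdry_finite (G : SimpleGraph V) (hloc : ∀ v : V, (G.neighborSet v).Finite)
    {S : Set V} (hS : S.Finite) : (edgeBdry G S).Finite := by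
  apply Set.Finite.subset (hS.biUnion (fun x _ => (hloc x).image (fun y => s(x, y))))
  rintro e ⟨he, x, hx, y, hy, rfl⟩
  exact Set.mem_biUnion hx ⟨y, (SimpleGraph.mem_edgeSet G).mp he, rfl⟩

lemma edgeBdry_submod (G : SimpleGraph V) (hloc : ∀ v : V, (G.neighborSet v).Finite)
    {S T : Set V} (hS : S.Finite) (hT : T.Finite) :
    (edgeBdry G (S ∪ T)).ncard + (edgeBdry G (S ∩ T)).ncard ≤
      (edgeBdry G S).ncard + (edgeBdry G T).ncard := by
  have hfS := edgeBdry_finite G hloc hS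
  have hfT := edgeBdry_finite G hloc hT
  have hfU := edgeBdry_finite G hloc (hS.union hT)
  have hfI := edgeBdry_finite G hloc (hS.inter_of_left T)
  have h1 : edgeBdry G (S ∪ T) ∪ edgeBdry G (S ∩ T) ⊆ edgeBdry G S ∪ edgeBdry G T := by
    rintro e (⟨he, x, hx, y, hy, rfl⟩ | ⟨he, x, hx, y, hy, rfl⟩)
    · rcases hx with hx | hx
      · exact Or.inl ⟨he, x, hx, y, fun h => hy (Or.inl h), rfl⟩
      · exact Or.inr ⟨he, x, hx, y, fun h => hy (Or.inr h), rfl⟩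
    · by_cases hyS : y ∈ S
      · exact Or.inr ⟨he, x, hx.2, y, fun h => hy ⟨hyS, h⟩, rfl⟩
      · exact Or.inl ⟨he, x, hx.1, y, hyS, rfl⟩
  have h2 : edgeBdry G (S ∪ T) ∩ edgeBdry G (S ∩ T) ⊆ edgeBdry G S ∩ edgeBdry G T := by
    rintro e ⟨⟨he, x, hx, y, hy, rfl⟩, ⟨_, x', hx', y', hy', heq⟩⟩
    rcases Sym2.eq_iff.mp heq with ⟨hxx, hyy⟩ | ⟨hxy, hyx⟩
    · subst hxx; subst hyy
      exact ⟨⟨he, x, hx'.1, y, fun h => hy (Or.inl h), rfl⟩,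
             ⟨he, x, hx'.2, y, fun h => hy (Or.inr h), rfl⟩⟩
    · exact absurd (Or.inl (by rw [hyx]; exact hx'.1) : y ∈ S ∪ T) hy
  calc (edgeBdry G (S ∪ T)).ncard + (edgeBdry G (S ∩ T)).ncard
      = (edgeBdry G (S ∪ T) ∪ edgeBdry G (S ∩ T)).ncard +
          (edgeBdry G (S ∪ T) ∩ edgeBdry G (S ∩ T)).ncard :=
        (Set.ncard_union_add_ncard_inter _ _ hfU hfI).symm
    _ ≤ (edgeBdry G S ∪ edgeBdry G T).ncard + (edgeBdry G S ∩ edgeBdry G T).ncard :=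
        add_le_add (Set.ncard_le_ncard h1 (hfS.union hfT))
          (Set.ncard_le_ncard h2 (hfS.inter_of_left _))
    _ = (edgeBdry G S).ncard + (edgeBdry G T).ncard :=
        Set.ncard_union_add_ncard_inter _ _ hfS hfT

lemma isolation_supermod (G : SimpleGraph V) (hloc : ∀ v : V, (G.neighborSet v).Finite)
    (q : ℝ) {S T : Set V} (hS : S.Finite) (hT : T.Finite) :
    isolation G q S + isolation G q T ≤ isolation G q (S ∪ T) + isolation G q (S ∩ T) := by
  have hcard : (S ∪ T).ncard + (S ∩ T).ncard = S.ncard + T.ncard :=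
    Set.ncard_union_add_ncard_inter _ _ hS hT
  have hbd := edgeBdry_submod G hloc hS hT
  have hc : ((S ∪ T).ncard : ℝ) + ((S ∩ T).ncard : ℝ) = (S.ncard : ℝ) + (T.ncard : ℝ) := by
    exact_mod_cast congrArg (Nat.cast : ℕ → ℝ) hcard
  have hb : ((edgeBdry G (S ∪ T)).ncard : ℝ) + ((edgeBdry G (S ∩ T)).ncard : ℝ) ≤
      ((edgeBdry G S).ncard : ℝ) + ((edgeBdry G T).ncard : ℝ) := by exact_mod_cast hbd
  have hq' : q * ((S ∪ T).ncard : ℝ) + q * ((S ∩ T).ncard : ℝ) =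
      q * (S.ncard : ℝ) + q * (T.ncard : ℝ) := by rw [← mul_add, ← mul_add, hc]
  simp only [isolation]
  linarith

lemma core_union_two (G : SimpleGraph V) (hloc : ∀ v : V, (G.neighborSet v).Finite)
    (q : ℝ) {S T : Set V} (hS : IsIsolatedCore G q S) (hT : IsIsolatedCore G q T) :
    IsIsolatedCore G q (S ∪ T) := by
  obtain ⟨hSf, hScore⟩ := hS
  obtain ⟨hTf, hTcore⟩ := hT
  have hUf : (S ∪ T).Finite := hSf.union hTf
  refine ⟨hUf, ?_⟩
  have key : ∀ n : ℕ, ∀ A : Set V, A ⊂ S ∪ T → ((S ∪ T) \ A).ncard ≤ n →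
      isolation G q A < isolation G q (S ∪ T) := by
    intro n
    induction n with
    | zero =>
      intro A hA hcard
      obtain ⟨x, hx⟩ := Set.exists_of_ssubset hA
      have : ((S ∪ T) \ A).ncard ≠ 0 :=
        Set.ncard_ne_zero_of_mem (⟨hx.1, hx.2⟩ : x ∈ (S ∪ T) \ A) hUf.diff
      omega
    | succ n ih =>
      intro A hA hcard
      have hAsub : A ⊆ S ∪ T := hA.subset
      have hAf : A.Finite := hUf.subset hAsub
      have hnotboth : ¬ S ⊆ A ∨ ¬ T ⊆ A := by
        by_contra h
        push_neg at h
        exact hA.not_subset (Set.union_subset h.1 h.2)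
      -- a generic step for a core C with ¬ C ⊆ A
      have step : ∀ C : Set V, C.Finite →
          (∀ B : Set V, B ⊂ C → isolation G q B < isolation G q C) →
          C ⊆ S ∪ T → ¬ C ⊆ A →
          isolation G q A < isolation G q (S ∪ T) := by
        intro C hCf hCcore hCsub hCA
        obtain ⟨x, hxC, hxA⟩ := Set.not_subset.mp hCA
        have hACss : A ∩ C ⊂ C :=
          ⟨Set.inter_subset_right, fun h => hxA (h hxC).1⟩
        have h1 : isolation G q (A ∩ C) < isolation G q C := hCcore _ hACss
        have h2 := isolation_supermod G hloc q hAf hCf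
        have h3 : isolation G q A < isolation G q (A ∪ C) := by linarith
        have hUsub : A ∪ C ⊆ S ∪ T := Set.union_subset hAsub hCsub
        rcases hUsub.ssubset_or_eq with hss | heq
        · have hdiff : (S ∪ T) \ (A ∪ C) ⊂ (S ∪ T) \ A := by
            refine ⟨Set.diff_subset_diff_right Set.subset_union_left, ?_⟩
            intro h
            have hx1 : x ∈ (S ∪ T) \ A := ⟨hCsub hxC, hxA⟩
            have hx2 := h hx1
            exact hx2.2 (Or.inr hxC)
          have hlt : ((S ∪ T) \ (A ∪ C)).ncard < ((S ∪ T) \ A).ncard :=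
            Set.ncard_lt_ncard hdiff hUf.diff
          have := ih (A ∪ C) hss (by omega)
          linarith
        · rw [heq] at h3; exact h3
      rcases hnotboth with h | h
      · exact step S hSf hScore Set.subset_union_left h
      · exact step T hTf hTcore Set.subset_union_right h
  intro A hA
  exact key ((S ∪ T) \ A).ncard A hA le_rfl

/-- Let `q > 0`. The union of finitely many `q`-isolated cores of `G` is again a
`q`-isolated core of `G`. -/
theorem stmt3 (G : SimpleGraph V) (hloc : ∀ v : V, (G.neighborSet v).Finite)
    (q : ℝ) (hq : 0 < q) {ι : Type*} (s : Finset ι) (f : ι → Set V)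
    (hf : ∀ i ∈ s, IsIsolatedCore G q (f i)) :
    IsIsolatedCore G q (⋃ i ∈ s, f i) := by
  classical
  induction s using Finset.induction_on with
  | empty =>
    simp only [Finset.notMem_empty, Set.iUnion_of_empty, Set.iUnion_empty]
    exact ⟨Set.finite_empty, fun A hA => absurd (Set.subset_empty_iff.mp hA.subset) hA.ne⟩
  | insert a t hnotmem ih =>
    rw [Finset.set_biUnion_insert]
    exact core_union_two G hloc q (hf a (Finset.mem_insert_self a t))
      (ih fun i hi => hf i (Finset.mem_insert_of_mem hi))
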